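/- For every triple of real numbers (a,b,c) ≠ (0,0,0) and for any two unit vectors ψ₁, ψ₂ in the two-dimensional subspace V₁ := span_ℂ{v₁, w₁} of (ℂ²)^{⊗3}, there exists X ∈ SU(2) such that (X⊗X⊗X)ψ₁ = ψ₂. That is, the group of local symmetric special unitary transformations acts transitively on the unit sphere of V₁. -/

import Mathlib

open Matrix Complex

noncomputable section

/-- Index type for three qubits: `(ℂ²)^{⊗3} ≅ ℂ⁸` with basis `|jkl⟩`. -/
abbrev Q3 := Fin 2 × Fin 2 × Fin 2

/-- Pauli matrix σx. -/
def sx : Matrix (Fin 2) (Fin 2) ℂ := !![0, 1; 1, 0]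
/-- Pauli matrix σy. -/
def sy : Matrix (Fin 2) (Fin 2) ℂ := !![0, I; -I, 0]
/-- Pauli matrix σz. -/
def sz : Matrix (Fin 2) (Fin 2) ℂ := !![1, 0; 0, -1]

/-- Tensor (Kronecker) product of three 2×2 matrices, as an 8×8 matrix. -/
def tens3 (A B C : Matrix (Fin 2) (Fin 2) ℂ) : Matrix Q3 Q3 ℂ :=
  fun p q => A p.1 q.1 * B p.2.1 q.2.1 * C p.2.2 q.2.2

/-- Computational basis vector `|jkl⟩`. -/
def ket (j k l : Fin 2) : Q3 → ℂ := fun p => if p = (j, k, l) then 1 else 0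

/-- φ₀ = |000⟩. -/
def phi0 : Q3 → ℂ := ket 0 0 0
/-- φ₁ = |100⟩+|010⟩+|001⟩. -/
def phi1 : Q3 → ℂ := ket 1 0 0 + ket 0 1 0 + ket 0 0 1
/-- φ₂ = |110⟩+|011⟩+|101⟩. -/
def phi2 : Q3 → ℂ := ket 1 1 0 + ket 0 1 1 + ket 1 0 1
/-- φ₃ = |111⟩. -/
def phi3 : Q3 → ℂ := ket 1 1 1

/-- λ = 2√(3a²+3b²+3c²+3bc). -/
def lam (a b c : ℝ) : ℝ := 2 * Real.sqrt (3*a^2 + 3*b^2 + 3*c^2 + 3*b*c)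

def x2 (a b c : ℝ) : ℂ := (5/3 : ℂ) * (lam a b c : ℝ) - 6*(b:ℂ) - 2*I*(a:ℂ) - 2*(c:ℂ)
def x3 (a b c : ℝ) : ℂ := -((lam a b c : ℝ) : ℂ)/3 + 6*I*(a:ℂ) - 4*(c:ℂ) + 2*(b:ℂ)
def x5 (a b c : ℝ) : ℂ := -(x2 a b c + x3 a b c)
def x4 (a b c : ℝ) : ℂ := (5/3 : ℂ) * (lam a b c : ℝ) - 6*(c:ℂ) + 2*I*(a:ℂ) - 2*(b:ℂ)
def x6 (a b c : ℝ) : ℂ := -((lam a b c : ℝ) : ℂ)/3 - 6*I*(a:ℂ) - 4*(b:ℂ) + 2*(c:ℂ)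
def x7 (a b c : ℝ) : ℂ := -(x4 a b c + x6 a b c)

/-- v₁ = x₂|001⟩ + x₃|010⟩ + x₅|100⟩. -/
def v1 (a b c : ℝ) : Q3 → ℂ := x2 a b c • ket 0 0 1 + x3 a b c • ket 0 1 0 + x5 a b c • ket 1 0 0
/-- w₁ = x₄|011⟩ + x₆|101⟩ + x₇|110⟩. -/
def w1 (a b c : ℝ) : Q3 → ℂ := x4 a b c • ket 0 1 1 + x6 a b c • ket 1 0 1 + x7 a b c • ket 1 1 0

def y2 (a b c : ℝ) : ℂ := (5/3 : ℂ) * (lam a b c : ℝ) + 6*(b:ℂ) + 2*I*(a:ℂ) + 2*(c:ℂ)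
def y3 (a b c : ℝ) : ℂ := -((lam a b c : ℝ) : ℂ)/3 - 6*I*(a:ℂ) + 4*(c:ℂ) - 2*(b:ℂ)
def y5 (a b c : ℝ) : ℂ := -(y2 a b c + y3 a b c)
def y4 (a b c : ℝ) : ℂ := (5/3 : ℂ) * (lam a b c : ℝ) + 6*(c:ℂ) - 2*I*(a:ℂ) + 2*(b:ℂ)
def y6 (a b c : ℝ) : ℂ := -((lam a b c : ℝ) : ℂ)/3 + 6*I*(a:ℂ) + 4*(b:ℂ) - 2*(c:ℂ)
def y7 (a b c : ℝ) : ℂ := -(y4 a b c + y6 a b c)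

/-- v₂ = y₂|001⟩ + y₃|010⟩ + y₅|100⟩. -/
def v2 (a b c : ℝ) : Q3 → ℂ := y2 a b c • ket 0 0 1 + y3 a b c • ket 0 1 0 + y5 a b c • ket 1 0 0
/-- w₂ = y₄|011⟩ + y₆|101⟩ + y₇|110⟩. -/
def w2 (a b c : ℝ) : Q3 → ℂ := y4 a b c • ket 0 1 1 + y6 a b c • ket 1 0 1 + y7 a b c • ket 1 1 0


section St12aux

lemma St12.lamC_sq (a b c : ℝ) :
    ((lam a b c : ℝ) : ℂ)^2 = 12*((a:ℂ)^2+(b:ℂ)^2+(c:ℂ)^2+(b:ℂ)*(c:ℂ)) := by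
  have h : (lam a b c)^2 = 12*(a^2+b^2+c^2+b*c) := by
    unfold lam
    rw [mul_pow, Real.sq_sqrt (by nlinarith [sq_nonneg (b+c), sq_nonneg a, sq_nonneg b, sq_nonneg c])]
    ring
  norm_cast

lemma St12.R1 (a b c : ℝ) : x3 a b c * x4 a b c = x5 a b c * x6 a b c := by
  unfold x5 x2 x3 x4 x6
  linear_combination (-1 : ℂ) * St12.lamC_sq a b c - 12*(a:ℂ)^2 * Complex.I_sq

lemma St12.R2 (a b c : ℝ) : x2 a b c * x4 a b c = x5 a b c * x7 a b c := by
  unfold x5 x7 x2 x3 x4 x6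
  linear_combination St12.lamC_sq a b c + 12*(a:ℂ)^2 * Complex.I_sq

lemma St12.R3 (a b c : ℝ) : x2 a b c * x6 a b c = x3 a b c * x7 a b c := by
  unfold x7 x2 x3 x4 x6
  linear_combination (-1 : ℂ) * St12.lamC_sq a b c - 12*(a:ℂ)^2 * Complex.I_sq

end St12aux
section St12aux2
open ComplexConjugate

lemma St12.su2_mem (p q : ℂ) (h : p * conj p + q * conj q = 1) :
    !![p, q; -(conj q), conj p] ∈ Matrix.specialUnitaryGroup (Fin 2) ℂ := by
  rw [Matrix.mem_specialUnitaryGroup_iff]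
  constructor
  · rw [Matrix.mem_unitaryGroup_iff]
    ext i j
    fin_cases i <;> fin_cases j <;>
      simp [Matrix.mul_apply, Fin.sum_univ_two, Matrix.conjTranspose_apply] <;>
      first | linear_combination h | linear_combination -h | linear_combination 2*h | linear_combination -2*h | ring
  · rw [Matrix.det_fin_two_of]
    linear_combination h

lemma St12.rot (z1 w1 z2 w2 : ℂ) (h1 : z1 * conj z1 + w1 * conj w1 = 1)
    (h2 : z2 * conj z2 + w2 * conj w2 = 1) :
    ∃ p q : ℂ, p * conj p + q * conj q = 1 ∧ p * z1 + q * w1 = z2 ∧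
      -(conj q) * z1 + conj p * w1 = w2 := by
  refine ⟨z2 * conj z1 + conj w2 * w1, z2 * conj w1 - conj w2 * z1, ?_, ?_, ?_⟩
  · simp only [map_add, map_sub, _root_.map_mul, Complex.conj_conj]
    linear_combination (z2 * conj z2 + w2 * conj w2) * h1 + h2
  · linear_combination z2 * h1
  · simp only [map_add, map_sub, _root_.map_mul, Complex.conj_conj]
    linear_combination w2 * h1
end St12aux2
section St12aux3
open ComplexConjugate

/-- auxiliary vector: image direction of v₁ under lowering. -/
def St12.uu (a b c : ℝ) : Q3 → ℂ :=
  x5 a b c • ket 0 1 1 + x3 a b c • ket 1 0 1 + x2 a b c • ket 1 1 0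

/-- auxiliary vector: image direction of w₁ under raising. -/
def St12.uu' (a b c : ℝ) : Q3 → ℂ :=
  x7 a b c • ket 0 0 1 + x6 a b c • ket 0 1 0 + x4 a b c • ket 1 0 0

set_option maxHeartbeats 2000000 in
lemma St12.key (a b c : ℝ) (p q α β : ℂ) (h : p * conj p + q * conj q = 1) :
    (tens3 !![p, q; -(conj q), conj p] !![p, q; -(conj q), conj p]
        !![p, q; -(conj q), conj p]).mulVec (α • v1 a b c + β • w1 a b c) =
      (α * p) • v1 a b c + (α * conj q) • St12.uu a b c
        + (-(β * q)) • St12.uu' a b c + (β * conj p) • w1 a b c := by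
  funext pt
  obtain ⟨i, j, k⟩ := pt
  fin_cases i <;> fin_cases j <;> fin_cases k <;>
    simp [Matrix.mulVec, dotProduct, Fintype.sum_prod_type, Fin.sum_univ_two,
      tens3, v1, w1, St12.uu, St12.uu', ket, x5, x7, Prod.ext_iff]
  · ring
  · linear_combination (q*β*(x6 a b c) + q*β*(x4 a b c) + p*α*(x2 a b c)) * h
  · linear_combination (-q*β*(x6 a b c) + p*α*(x3 a b c)) * h
  · linear_combination (-(conj q)*α*(x3 a b c) - (conj q)*α*(x2 a b c) + (conj p)*β*(x4 a b c)) * h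
  · linear_combination (-q*β*(x4 a b c) - p*α*(x3 a b c) - p*α*(x2 a b c)) * h
  · linear_combination ((conj q)*α*(x3 a b c) + (conj p)*β*(x6 a b c)) * h
  · linear_combination ((conj q)*α*(x2 a b c) - (conj p)*β*(x6 a b c) - (conj p)*β*(x4 a b c)) * h
  · ring
end St12aux3
open ComplexConjugate in
lemma St12.norm_combo (a b c : ℝ) (α β : ℂ) :
    ∑ p : Q3, Complex.normSq ((α • v1 a b c + β • w1 a b c) p)
      = Complex.normSq α * (Complex.normSq (x2 a b c) + Complex.normSq (x3 a b c)
          + Complex.normSq (x5 a b c))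
        + Complex.normSq β * (Complex.normSq (x4 a b c) + Complex.normSq (x6 a b c)
          + Complex.normSq (x7 a b c)) := by
  rw [Fintype.sum_prod_type]
  simp [Fintype.sum_prod_type, Fin.sum_univ_two, v1, w1, ket, Prod.ext_iff,
    Complex.normSq_mul]
  ring
open ComplexConjugate

section St12main

private lemma St12.normSq_sum_nonneg (z w u : ℂ) :
    0 ≤ Complex.normSq z + Complex.normSq w + Complex.normSq u := by
  have := Complex.normSq_nonneg z
  have := Complex.normSq_nonneg w
  have := Complex.normSq_nonneg u
  linarith

theorem statement12' (a b c : ℝ)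
    (ψ1 ψ2 : Q3 → ℂ)
    (h1 : ψ1 ∈ Submodule.span ℂ ({v1 a b c, w1 a b c} : Set (Q3 → ℂ)))
    (h2 : ψ2 ∈ Submodule.span ℂ ({v1 a b c, w1 a b c} : Set (Q3 → ℂ)))
    (n1 : ∑ p : Q3, Complex.normSq (ψ1 p) = 1)
    (n2 : ∑ p : Q3, Complex.normSq (ψ2 p) = 1) :
    ∃ X ∈ Matrix.specialUnitaryGroup (Fin 2) ℂ,
      (tens3 X X X).mulVec ψ1 = ψ2 := by
  obtain ⟨α, β, hαβ⟩ := Submodule.mem_span_pair.mp h1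
  obtain ⟨γ, δ, hγδ⟩ := Submodule.mem_span_pair.mp h2
  set N2 : ℝ := Complex.normSq (x2 a b c) + Complex.normSq (x3 a b c)
      + Complex.normSq (x5 a b c) with hN2def
  set M2 : ℝ := Complex.normSq (x4 a b c) + Complex.normSq (x6 a b c)
      + Complex.normSq (x7 a b c) with hM2def
  have hn1 : Complex.normSq α * N2 + Complex.normSq β * M2 = 1 := by
    rw [← St12.norm_combo a b c α β, hαβ, n1]
  have hn2 : Complex.normSq γ * N2 + Complex.normSq δ * M2 = 1 := by
    rw [← St12.norm_combo a b c γ δ, hγδ, n2]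
  have hN2nn : 0 ≤ N2 := St12.normSq_sum_nonneg _ _ _
  have hM2nn : 0 ≤ M2 := St12.normSq_sum_nonneg _ _ _
  by_cases hM : M2 = 0
  · -- w₁ = 0
    have hx4 : x4 a b c = 0 := by
      apply Complex.normSq_eq_zero.mp
      nlinarith [Complex.normSq_nonneg (x4 a b c), Complex.normSq_nonneg (x6 a b c),
        Complex.normSq_nonneg (x7 a b c)]
    have hx6 : x6 a b c = 0 := by
      apply Complex.normSq_eq_zero.mp
      nlinarith [Complex.normSq_nonneg (x4 a b c), Complex.normSq_nonneg (x6 a b c),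
        Complex.normSq_nonneg (x7 a b c)]
    have hx7 : x7 a b c = 0 := by
      apply Complex.normSq_eq_zero.mp
      nlinarith [Complex.normSq_nonneg (x4 a b c), Complex.normSq_nonneg (x6 a b c),
        Complex.normSq_nonneg (x7 a b c)]
    have hw : w1 a b c = 0 := by
      funext pt; simp [w1, hx4, hx6, hx7]
    have hNα : Complex.normSq α * N2 = 1 := by rw [hM] at hn1; linarith
    have hNγ : Complex.normSq γ * N2 = 1 := by rw [hM] at hn2; linarith
    have hα0 : α ≠ 0 := by
      intro h; rw [h] at hNα; simp at hNα
    have hN0 : N2 ≠ 0 := by intro h; rw [h] at hNα; simp at hNα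
    have hnormeq : Complex.normSq α = Complex.normSq γ :=
      mul_right_cancel₀ hN0 (hNα.trans hNγ.symm)
    refine ⟨!![γ/α, (0:ℂ); -(conj (0:ℂ)), conj (γ/α)], ?_, ?_⟩
    · apply St12.su2_mem
      rw [Complex.mul_conj]
      simp only [map_zero, mul_zero, add_zero]
      rw [Complex.normSq_div, ← hnormeq]
      rw [div_self (by simpa using hα0)]
      simp
    · rw [← hαβ, St12.key a b c (γ/α) 0 α β (by
        rw [Complex.mul_conj]
        simp only [map_zero, mul_zero, add_zero]
        rw [Complex.normSq_div, ← hnormeq, div_self (by simpa using hα0)]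
        simp), ← hγδ, hw]
      simp only [map_zero, mul_zero, smul_zero, add_zero, neg_zero, zero_smul]
      have hc : α * (γ / α) = γ := by field_simp
      rw [hc]
  · by_cases hN : N2 = 0
    · -- v₁ = 0
      have hx2 : x2 a b c = 0 := by
        apply Complex.normSq_eq_zero.mp
        nlinarith [Complex.normSq_nonneg (x2 a b c), Complex.normSq_nonneg (x3 a b c),
          Complex.normSq_nonneg (x5 a b c)]
      have hx3 : x3 a b c = 0 := by
        apply Complex.normSq_eq_zero.mp
        nlinarith [Complex.normSq_nonneg (x2 a b c), Complex.normSq_nonneg (x3 a b c),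
          Complex.normSq_nonneg (x5 a b c)]
      have hx5 : x5 a b c = 0 := by
        apply Complex.normSq_eq_zero.mp
        nlinarith [Complex.normSq_nonneg (x2 a b c), Complex.normSq_nonneg (x3 a b c),
          Complex.normSq_nonneg (x5 a b c)]
      have hv : v1 a b c = 0 := by funext pt; simp [v1, hx2, hx3, hx5]
      have hNβ : Complex.normSq β * M2 = 1 := by rw [hN] at hn1; linarith
      have hNδ : Complex.normSq δ * M2 = 1 := by rw [hN] at hn2; linarith
      have hβ0 : β ≠ 0 := by intro h; rw [h] at hNβ; simp at hNβ
      have hM0 : M2 ≠ 0 := hM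
      have hnormeq : Complex.normSq β = Complex.normSq δ :=
        mul_right_cancel₀ hM0 (hNβ.trans hNδ.symm)
      have hp1 : (conj (δ/β)) * conj (conj (δ/β)) + (0:ℂ) * conj (0:ℂ) = 1 := by
        rw [Complex.conj_conj, mul_comm, Complex.mul_conj]
        simp only [map_zero, mul_zero, add_zero]
        rw [Complex.normSq_div, ← hnormeq, div_self (by simpa using hβ0)]
        simp
      refine ⟨!![conj (δ/β), (0:ℂ); -(conj (0:ℂ)), conj (conj (δ/β))], St12.su2_mem _ _ hp1, ?_⟩
      rw [← hαβ, St12.key a b c (conj (δ/β)) 0 α β hp1, ← hγδ, hv]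
      simp only [Complex.conj_conj, map_zero, mul_zero, zero_smul, smul_zero,
        add_zero, zero_add, neg_zero]
      have hc : β * (δ / β) = δ := by field_simp
      rw [hc]
    · -- main case: both N2 ≠ 0 and M2 ≠ 0
      set C4 := conj (x4 a b c) with hC4
      set C6 := conj (x6 a b c) with hC6
      set C7 := conj (x7 a b c) with hC7
      set μ : ℂ := -(x5 a b c * C4 + x3 a b c * C6 + x2 a b c * C7) / (M2 : ℂ) with hμdef
      have hM2C : (M2 : ℂ) = x4 a b c * C4 + x6 a b c * C6 + x7 a b c * C7 := by
        rw [hC4, hC6, hC7, Complex.mul_conj, Complex.mul_conj, Complex.mul_conj, hM2def]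
        push_cast; ring
      have hM2C0 : (M2 : ℂ) ≠ 0 := by exact_mod_cast hM
      have hμ4 : μ * x4 a b c = -(x5 a b c) := by
        rw [hμdef, div_mul_eq_mul_div, div_eq_iff hM2C0, hM2C]
        linear_combination (-C6) * St12.R1 a b c - C7 * St12.R2 a b c
      have hμ6 : μ * x6 a b c = -(x3 a b c) := by
        rw [hμdef, div_mul_eq_mul_div, div_eq_iff hM2C0, hM2C]
        linear_combination C4 * St12.R1 a b c - C7 * St12.R3 a b c
      have hμ7 : μ * x7 a b c = -(x2 a b c) := by
        rw [hμdef, div_mul_eq_mul_div, div_eq_iff hM2C0, hM2C]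
        linear_combination C4 * St12.R2 a b c + C6 * St12.R3 a b c
      have hμn : Complex.normSq μ * M2 = N2 := by
        have e4 := congrArg Complex.normSq hμ4
        have e6 := congrArg Complex.normSq hμ6
        have e7 := congrArg Complex.normSq hμ7
        rw [Complex.normSq_mul, Complex.normSq_neg] at e4 e6 e7
        rw [hN2def, hM2def]
        linear_combination e4 + e6 + e7
      have hμ0 : μ ≠ 0 := by
        intro h
        rw [h] at hμn; simp at hμn
        exact hN hμn.symm
      have hμn0 : Complex.normSq μ ≠ 0 := fun h => hμ0 (Complex.normSq_eq_zero.mp h)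
      set N : ℝ := Real.sqrt N2 with hNdef
      have hNN : N * N = N2 := Real.mul_self_sqrt hN2nn
      have hN0 : (N : ℂ) ≠ 0 := by
        simp only [ne_eq, Complex.ofReal_eq_zero]
        intro h
        rw [h] at hNN; simp at hNN; exact hN hNN.symm
      -- unit vectors in ℂ²
      have key0 : ∀ z : ℂ, Complex.normSq (z * N / μ) = Complex.normSq z * M2 := by
        intro z
        rw [Complex.normSq_div, Complex.normSq_mul, Complex.normSq_ofReal,
          div_eq_iff hμn0]
        linear_combination (Complex.normSq z) * hNN - (Complex.normSq z) * hμn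
      have hu1 : (α * N) * conj (α * N) + (β * N / μ) * conj (β * N / μ) = 1 := by
        rw [Complex.mul_conj, Complex.mul_conj]
        norm_cast
        rw [key0, Complex.normSq_mul, Complex.normSq_ofReal]
        linear_combination hn1 + Complex.normSq α * hNN
      have hu2 : (γ * N) * conj (γ * N) + (δ * N / μ) * conj (δ * N / μ) = 1 := by
        rw [Complex.mul_conj, Complex.mul_conj]
        norm_cast
        rw [key0, Complex.normSq_mul, Complex.normSq_ofReal]
        linear_combination hn2 + Complex.normSq γ * hNN
      obtain ⟨p, q, hpq, he1, he2⟩ := St12.rot (α * N) (β * N / μ) (γ * N) (δ * N / μ) hu1 hu2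
      refine ⟨!![p, q; -(conj q), conj p], St12.su2_mem p q hpq, ?_⟩
      rw [← hαβ, St12.key a b c p q α β hpq, ← hγδ]
      have huu : St12.uu a b c = (-μ) • w1 a b c := by
        simp only [St12.uu, w1, smul_add, smul_smul]
        rw [show -μ * x4 a b c = x5 a b c from by linear_combination -hμ4,
          show -μ * x6 a b c = x3 a b c from by linear_combination -hμ6,
          show -μ * x7 a b c = x2 a b c from by linear_combination -hμ7]
      have huu' : St12.uu' a b c = (-μ⁻¹) • v1 a b c := by
        have h1 : μ • St12.uu' a b c = -(v1 a b c) := by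
          simp only [St12.uu', v1, smul_add, smul_smul, hμ4, hμ6, hμ7]
          module
        calc St12.uu' a b c = μ⁻¹ • (μ • St12.uu' a b c) := by
              rw [smul_smul, inv_mul_cancel₀ hμ0, one_smul]
          _ = μ⁻¹ • (-(v1 a b c)) := by rw [h1]
          _ = (-μ⁻¹) • v1 a b c := by module
      rw [huu, huu']
      have sv : α * p + β * q * μ⁻¹ = γ := by
        have h := he1
        apply mul_left_cancel₀ hN0
        linear_combination h
      have sw : -(α * conj q * μ) + β * conj p = δ := by
        have h := he2
        have hmi : μ * μ⁻¹ = 1 := mul_inv_cancel₀ hμ0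
        apply mul_left_cancel₀ hN0
        linear_combination μ * h - (β * conj p * (N:ℂ) - δ * (N:ℂ)) * hmi
      match_scalars
      · linear_combination sv
      · linear_combination sw
end St12main

/-- for (a,b,c) ≠ (0,0,0), the local symmetric special unitary
transformations X⊗X⊗X, X ∈ SU(2), act transitively on the unit sphere of the
two-dimensional invariant subspace V₁ = span{v₁, w₁}. -/
theorem statement12 (a b c : ℝ) (habc : (a, b, c) ≠ (0, 0, 0))
    (ψ1 ψ2 : Q3 → ℂ)
    (h1 : ψ1 ∈ Submodule.span ℂ ({v1 a b c, w1 a b c} : Set (Q3 → ℂ)))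
    (h2 : ψ2 ∈ Submodule.span ℂ ({v1 a b c, w1 a b c} : Set (Q3 → ℂ)))
    (n1 : ∑ p : Q3, Complex.normSq (ψ1 p) = 1)
    (n2 : ∑ p : Q3, Complex.normSq (ψ2 p) = 1) :
    ∃ X ∈ Matrix.specialUnitaryGroup (Fin 2) ℂ,
      (tens3 X X X).mulVec ψ1 = ψ2 := by
  exact statement12' a b c ψ1 ψ2 h1 h2 n1 n2
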